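/- (Decision-boundary invariance under symmetric spherical augmentation.) Consider linearly separable binary data and the SVM: min ‖w‖₂ subject to y_i wᵀx_i ≥ 1 for all i. Apply equal spherical augmentation of radius ε to both classes, yielding: min ‖w‖₂ subject to y_i wᵀx_i − ε‖w‖₂ ≥ 1, with ε ≥ 0 small enough that the problem is feasible. Then the minimizer of the augmented problem is a positive scalar multiple of the minimizer of the original SVM; in particular the decision boundary {x : wᵀx = 0} is unchanged. -/

import Mathlib

open scoped RealInnerProductSpace

/-- equal spherical augmentation of both classes does not change the max-margin
direction: the augmented-SVM minimizer is a positive scalar multiple of the SVM minimizer,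
hence the decision boundary is unchanged. -/
theorem symmetric_augmentation_preserves_svm_direction
    {d n : ℕ} (x : Fin n → EuclideanSpace ℝ (Fin d)) (y : Fin n → ℝ)
    (hy : ∀ i, y i = 1 ∨ y i = -1)
    (wh : EuclideanSpace ℝ (Fin d)) (hwh : wh ≠ 0)
    -- `wh` solves the original hard-margin SVM:
    (hfeas : ∀ i, 1 ≤ y i * ⟪wh, x i⟫)
    (hopt : ∀ w : EuclideanSpace ℝ (Fin d), (∀ i, 1 ≤ y i * ⟪w, x i⟫) → ‖wh‖ ≤ ‖w‖)
    (ε : ℝ) (hε : 0 ≤ ε) (hsmall : ε * ‖wh‖ < 1)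
    (w' : EuclideanSpace ℝ (Fin d))
    -- `w'` solves the symmetrically augmented SVM:
    (hfeas' : ∀ i, 1 ≤ y i * ⟪w', x i⟫ - ε * ‖w'‖)
    (hopt' : ∀ w : EuclideanSpace ℝ (Fin d),
      (∀ i, 1 ≤ y i * ⟪w, x i⟫ - ε * ‖w‖) → ‖w'‖ ≤ ‖w‖) :
    (∃ c : ℝ, 0 < c ∧ w' = c • wh) ∧
    (∀ z : EuclideanSpace ℝ (Fin d), ⟪w', z⟫ = 0 ↔ ⟪wh, z⟫ = 0) := by
  set a : ℝ := ‖wh‖ with ha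
  have ha0 : 0 < a := norm_pos_iff.mpr hwh
  have h1 : 0 < 1 - ε * a := by linarith
  -- w₀ = (1-εa)⁻¹ • wh is feasible for the augmented problem
  have hw0feas : ∀ i, 1 ≤ y i * ⟪(1 - ε * a)⁻¹ • wh, x i⟫ - ε * ‖(1 - ε * a)⁻¹ • wh‖ := by
    intro i
    have hnorm : ‖(1 - ε * a)⁻¹ • wh‖ = (1 - ε * a)⁻¹ * a := by
      rw [norm_smul, Real.norm_eq_abs, abs_of_pos (inv_pos.mpr h1)]
    rw [real_inner_smul_left, hnorm]
    have := hfeas i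
    have h2 : (1 - ε * a)⁻¹ * (1 - ε * a) = 1 := inv_mul_cancel₀ (ne_of_gt h1)
    have hεa : 0 ≤ ε * a := mul_nonneg hε (le_of_lt ha0)
    nlinarith [inv_pos.mpr h1]
  have hub : ‖w'‖ ≤ (1 - ε * a)⁻¹ * a := by
    have := hopt' _ hw0feas
    rwa [norm_smul, Real.norm_eq_abs, abs_of_pos (inv_pos.mpr h1)] at this
  -- v = (1+ε‖w'‖)⁻¹ • w' is feasible for the original problem
  set t : ℝ := 1 + ε * ‖w'‖ with ht
  have ht0 : 0 < t := by positivity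
  set v : EuclideanSpace ℝ (Fin d) := t⁻¹ • w' with hv
  have hvnorm : ‖v‖ = t⁻¹ * ‖w'‖ := by
    rw [hv, norm_smul, Real.norm_eq_abs, abs_of_pos (inv_pos.mpr ht0)]
  have hvfeas : ∀ i, 1 ≤ y i * ⟪v, x i⟫ := by
    intro i
    rw [hv, real_inner_smul_left]
    have := hfeas' i
    have h2 : t⁻¹ * t = 1 := inv_mul_cancel₀ (ne_of_gt ht0)
    nlinarith [inv_pos.mpr ht0]
  have hlb : a ≤ ‖v‖ := hopt _ hvfeas
  -- hence ‖v‖ = a exactly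
  have hwlb : (1 - ε * a)⁻¹ * a ≤ ‖w'‖ := by
    rw [hvnorm] at hlb
    have : a * t ≤ ‖w'‖ := by
      have := mul_le_mul_of_nonneg_left hlb (le_of_lt ht0)
      calc a * t = t * a := mul_comm _ _
        _ ≤ t * (t⁻¹ * ‖w'‖) := this
        _ = ‖w'‖ := by field_simp
    rw [ht] at this
    rw [inv_mul_le_iff₀ h1]
    nlinarith
  have hw'norm : ‖w'‖ = (1 - ε * a)⁻¹ * a := le_antisymm hub hwlb
  have hveq : ‖v‖ = a := by
    have htval : t = (1 - ε * a)⁻¹ := by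
      rw [ht, hw'norm]
      field_simp
      ring
    rw [hvnorm, hw'norm, htval]
    field_simp
  -- midpoint argument: v = wh
  have hmid : ∀ i, 1 ≤ y i * ⟪(2:ℝ)⁻¹ • (v + wh), x i⟫ := by
    intro i
    rw [real_inner_smul_left, inner_add_left]
    have h1 := hvfeas i
    have h2 := hfeas i
    nlinarith
  have hmnorm : a ≤ ‖(2:ℝ)⁻¹ • (v + wh)‖ := hopt _ hmid
  have htri : ‖v + wh‖ = ‖v‖ + ‖wh‖ := by
    have hle : ‖v + wh‖ ≤ ‖v‖ + ‖wh‖ := norm_add_le _ _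
    have : ‖(2:ℝ)⁻¹ • (v + wh)‖ = 2⁻¹ * ‖v + wh‖ := by
      rw [norm_smul, Real.norm_eq_abs]; norm_num
    rw [this] at hmnorm
    rw [hveq, ← ha]
    linarith
  have hinner : ⟪v, wh⟫ = ‖v‖ * ‖wh‖ := by
    have hsq : ‖v + wh‖ ^ 2 = (‖v‖ + ‖wh‖) ^ 2 := by rw [htri]
    rw [norm_add_sq_real] at hsq
    nlinarith
  have hvwh : v = wh := by
    rw [inner_eq_norm_mul_iff_real] at hinner
    rw [hveq, ← ha] at hinner
    have := smul_right_injective (EuclideanSpace ℝ (Fin d)) (ne_of_gt ha0) hinner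
    exact this
  have hw'eq : w' = t • wh := by
    rw [← hvwh, hv, smul_smul]
    rw [mul_inv_cancel₀ (ne_of_gt ht0), one_smul]
  constructor
  · exact ⟨t, ht0, hw'eq⟩
  · intro z
    rw [hw'eq, real_inner_smul_left]
    constructor
    · intro h
      rcases mul_eq_zero.mp h with h' | h'
      · exact absurd h' (ne_of_gt ht0)
      · exact h'
    · intro h; rw [h, mul_zero]
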